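/- Fix constants a > 0, b > 0, a nonzero filter f ∈ ℂ^B, and let μ be a probability measure on ℂ whose second moment ∫ |h|² dμ(h) is finite. Then the averaged zeroth-order error probability admits the bound ∫ a·Q(b·√(σx²/M_dc(f, h))) dμ(h) ≤ (a/(b·√(σx²)·√(2π))) · √( ∫ M_dc(f, h) dμ(h) ). (The upper bound on the average [P_e]_0 obtained by combining the Gaussian tail bound Q(u) < e^{−u²/2}/(u√(2π)) with Jensen's inequality for the concave square root.) -/

import Mathlib

open MeasureTheory Set Filter

/-- `φ(f) = fᴴ x = Σᵢ conj(fᵢ)·xᵢ`. -/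
noncomputable def phi {B : ℕ} (x f : Fin B → ℂ) : ℂ :=
  ∑ i, (starRingEnd ℂ) (f i) * x i

/-- Squared Euclidean norm `‖f‖² = Σᵢ |fᵢ|²`. -/
noncomputable def nsq {B : ℕ} (f : Fin B → ℂ) : ℝ :=
  ∑ i, Complex.normSq (f i)

/-- Zeroth-order symbol-estimate MSE of the ZF equalizer for channel `h`. -/
noncomputable def Mdc {B : ℕ} (σx2 σw2 : ℝ) (h : ℂ) (x f : Fin B → ℂ) : ℝ :=
  (σx2 * (Complex.normSq h * Complex.normSq (phi x f - 1) + σw2 * nsq f) + σw2) /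
    (Complex.normSq h * Complex.normSq (phi x f) + σw2 * nsq f)

/-- Standard Gaussian tail function `Q(u) = (1/√(2π)) ∫_u^∞ e^{−t²/2} dt`. -/
noncomputable def Qfun (u : ℝ) : ℝ :=
  (Real.sqrt (2 * Real.pi))⁻¹ * ∫ t in Set.Ioi u, Real.exp (-t ^ 2 / 2)

lemma intOn_exp : ∀ u : ℝ, IntegrableOn (fun t : ℝ => Real.exp (-t ^ 2 / 2)) (Set.Ioi u) := by
  intro u
  have h := (integrable_exp_neg_mul_sq (by norm_num : (0:ℝ) < 1/2)).integrableOn (s := Set.Ioi u)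
  refine h.congr_fun (fun t _ => by ring_nf) measurableSet_Ioi

lemma int_t_exp (u : ℝ) (hu : 0 < u) :
    (∫ t in Set.Ioi u, t * Real.exp (-t ^ 2 / 2)) = Real.exp (-u ^ 2 / 2) := by
  have hderiv : ∀ t ∈ Set.Ici u, HasDerivAt (fun s : ℝ => -Real.exp (-s ^ 2 / 2))
      (t * Real.exp (-t ^ 2 / 2)) t := by
    intro t _
    have h1 : HasDerivAt (fun s : ℝ => -s ^ 2 / 2) (-t) t := by
      have := ((hasDerivAt_pow 2 t).neg).div_const 2
      simpa using this.congr_deriv (by ring)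
    have := (h1.exp).neg
    exact this.congr_deriv (by ring)
  have hlim : Tendsto (fun s : ℝ => -Real.exp (-s ^ 2 / 2)) atTop (nhds 0) := by
    rw [show (0:ℝ) = -0 by ring]
    apply Tendsto.neg
    apply Real.tendsto_exp_atBot.comp
    apply Tendsto.atBot_div_const (by norm_num)
    exact tendsto_neg_atBot_iff.mpr (tendsto_pow_atTop (by norm_num))
  have := integral_Ioi_of_hasDerivAt_of_nonneg' hderiv
    (fun t ht => mul_nonneg (lt_trans hu ht).le (Real.exp_pos _).le) hlim
  simpa using this

lemma exp_tail_le (u : ℝ) (hu : 0 < u) :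
    (∫ t in Set.Ioi u, Real.exp (-t ^ 2 / 2)) ≤ u⁻¹ := by
  have hint2 : IntegrableOn (fun t : ℝ => u⁻¹ * (t * Real.exp (-t ^ 2 / 2))) (Set.Ioi u) := by
    apply Integrable.const_mul
    have hderiv : ∀ t ∈ Set.Ici u, HasDerivAt (fun s : ℝ => -Real.exp (-s ^ 2 / 2))
        (t * Real.exp (-t ^ 2 / 2)) t := by
      intro t _
      have h1 : HasDerivAt (fun s : ℝ => -s ^ 2 / 2) (-t) t := by
        have := ((hasDerivAt_pow 2 t).neg).div_const 2
        simpa using this.congr_deriv (by ring)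
      have := (h1.exp).neg
      exact this.congr_deriv (by ring)
    have hlim : Tendsto (fun s : ℝ => -Real.exp (-s ^ 2 / 2)) atTop (nhds 0) := by
      rw [show (0:ℝ) = -0 by ring]
      apply Tendsto.neg
      apply Real.tendsto_exp_atBot.comp
      apply Tendsto.atBot_div_const (by norm_num)
      exact tendsto_neg_atBot_iff.mpr (tendsto_pow_atTop (by norm_num))
    exact integrableOn_Ioi_deriv_of_nonneg' hderiv
      (fun t ht => mul_nonneg (lt_trans hu ht).le (Real.exp_pos _).le) hlim
  calc (∫ t in Set.Ioi u, Real.exp (-t ^ 2 / 2))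
      ≤ ∫ t in Set.Ioi u, u⁻¹ * (t * Real.exp (-t ^ 2 / 2)) := by
        apply setIntegral_mono_on (intOn_exp u) hint2 measurableSet_Ioi
        intro t ht
        rw [Set.mem_Ioi] at ht
        have h1 : (1:ℝ) ≤ u⁻¹ * t := by
          rw [inv_mul_eq_div, le_div_iff₀ hu]; linarith
        nlinarith [Real.exp_pos (-t ^ 2 / 2), (Real.exp_pos (-t^2/2)).le]
    _ = u⁻¹ * Real.exp (-u ^ 2 / 2) := by
        rw [MeasureTheory.integral_const_mul, int_t_exp u hu]
    _ ≤ u⁻¹ * 1 := by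
        apply mul_le_mul_of_nonneg_left _ (by positivity)
        exact Real.exp_le_one_iff.mpr (by nlinarith [sq_nonneg u])
    _ = u⁻¹ := by ring

lemma Qfun_nonneg (u : ℝ) : 0 ≤ Qfun u := by
  unfold Qfun
  apply mul_nonneg (by positivity)
  exact setIntegral_nonneg measurableSet_Ioi (fun t _ => (Real.exp_pos _).le)

lemma Qfun_le (u : ℝ) (hu : 0 < u) : Qfun u ≤ (Real.sqrt (2 * Real.pi))⁻¹ * u⁻¹ := by
  unfold Qfun
  exact mul_le_mul_of_nonneg_left (exp_tail_le u hu) (by positivity)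

lemma Qfun_antitone : Antitone Qfun := by
  intro u v huv
  unfold Qfun
  apply mul_le_mul_of_nonneg_left _ (by positivity)
  apply setIntegral_mono_set (intOn_exp u)
    (Filter.Eventually.of_forall (fun t => (Real.exp_pos _).le))
  exact Filter.Eventually.of_forall (Set.Ioi_subset_Ioi huv)


/-- The upper bound on the average zeroth-order error probability obtained by
combining the Gaussian tail bound `Q(u) < e^{−u²/2}/(u√(2π))` with Jensen's
inequality for the concave square root:
`∫ a·Q(b·√(σx²/M_dc(f,h))) dμ(h) ≤ (a/(b·√σx²·√(2π)))·√(∫ M_dc(f,h) dμ(h))`. -/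
theorem average_zeroth_order_pe_upper_bound
    (B : ℕ) (hB : 1 ≤ B) (x : Fin B → ℂ) (hx : x ≠ 0)
    (σx2 σw2 : ℝ) (hσx : 0 < σx2) (hσw : 0 < σw2)
    (a b : ℝ) (ha : 0 < a) (hb : 0 < b)
    (f : Fin B → ℂ) (hf : f ≠ 0)
    (μ : Measure ℂ) [IsProbabilityMeasure μ]
    (hmom : Integrable (fun h : ℂ => Complex.normSq h) μ) :
    (∫ h, a * Qfun (b * Real.sqrt (σx2 / Mdc σx2 σw2 h x f)) ∂μ) ≤
      a / (b * Real.sqrt σx2 * Real.sqrt (2 * Real.pi)) *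
        Real.sqrt (∫ h, Mdc σx2 σw2 h x f ∂μ) := by
  set P : ℝ := Complex.normSq (phi x f - 1) with hP
  set Q : ℝ := Complex.normSq (phi x f) with hQ
  set N : ℝ := nsq f with hN
  have hNpos : 0 < N := by
    obtain ⟨i, hi⟩ := Function.ne_iff.mp hf
    exact Finset.sum_pos' (fun j _ => Complex.normSq_nonneg _)
      ⟨i, Finset.mem_univ i, by simpa using Complex.normSq_pos.mpr hi⟩
  set M : ℂ → ℝ := fun h => Mdc σx2 σw2 h x f with hMdef
  have hMeq : ∀ h, M h = (σx2 * (Complex.normSq h * P + σw2 * N) + σw2) /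
      (Complex.normSq h * Q + σw2 * N) := fun h => rfl
  have hdenpos : ∀ h : ℂ, 0 < Complex.normSq h * Q + σw2 * N := fun h => by
    have := Complex.normSq_nonneg h
    have h2 : 0 ≤ Complex.normSq h * Q := mul_nonneg this (Complex.normSq_nonneg _)
    nlinarith
  have hMpos : ∀ h, 0 < M h := by
    intro h
    rw [hMeq]
    apply div_pos _ (hdenpos h)
    have h2 : 0 ≤ Complex.normSq h * P := mul_nonneg (Complex.normSq_nonneg _) (Complex.normSq_nonneg _)
    have h3 : 0 < σw2 * N := mul_pos hσw hNpos
    nlinarith [mul_pos hσx (by linarith : (0:ℝ) < Complex.normSq h * P + σw2 * N)]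
  have hMcont : Continuous M := by
    rw [show M = fun h => (σx2 * (Complex.normSq h * P + σw2 * N) + σw2) /
      (Complex.normSq h * Q + σw2 * N) from funext hMeq]
    have cn : Continuous fun h : ℂ => Complex.normSq h := Complex.continuous_normSq
    exact ((continuous_const.mul ((cn.mul continuous_const).add continuous_const)).add
      continuous_const).div ((cn.mul continuous_const).add continuous_const)
      (fun h => (hdenpos h).ne')
  -- integrability of M
  have hMint : Integrable M μ := by
    have hg : Integrable (fun h : ℂ =>
        (σx2 * (Complex.normSq h * P + σw2 * N) + σw2) / (σw2 * N)) μ := by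
      apply Integrable.div_const
      exact (((hmom.mul_const P).add (integrable_const _)).const_mul σx2).add (integrable_const _)
    apply hg.mono' (hMcont.aestronglyMeasurable)
    refine Filter.Eventually.of_forall (fun h => ?_)
    rw [Real.norm_eq_abs, abs_of_pos (hMpos h), hMeq]
    apply div_le_div_of_nonneg_left _ (by positivity) _
    · have h2 : 0 ≤ Complex.normSq h * P := mul_nonneg (Complex.normSq_nonneg _) (Complex.normSq_nonneg _)
      have h3 : 0 < σw2 * N := mul_pos hσw hNpos
      nlinarith [mul_pos hσx (by linarith : (0:ℝ) < Complex.normSq h * P + σw2 * N)]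
    · have h2 : 0 ≤ Complex.normSq h * Q := mul_nonneg (Complex.normSq_nonneg _) (Complex.normSq_nonneg _)
      linarith
  -- integrability of sqrt M
  have hsqrtMint : Integrable (fun h => Real.sqrt (M h)) μ := by
    apply Integrable.mono' ((hMint.add (integrable_const 1)).div_const 2)
      ((hMcont.sqrt).aestronglyMeasurable)
    refine Filter.Eventually.of_forall (fun h => ?_)
    rw [Real.norm_eq_abs, abs_of_nonneg (Real.sqrt_nonneg _)]
    show Real.sqrt (M h) ≤ (M h + 1) / 2
    have h1 := Real.sq_sqrt (hMpos h).le
    nlinarith [sq_nonneg (Real.sqrt (M h) - 1)]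
  set C : ℝ := a / (b * Real.sqrt σx2 * Real.sqrt (2 * Real.pi)) with hC
  have hCpos : 0 < C := by positivity
  -- pointwise bound
  have hpt : ∀ h : ℂ, a * Qfun (b * Real.sqrt (σx2 / M h)) ≤ C * Real.sqrt (M h) := by
    intro h
    have hMh := hMpos h
    have hsq : Real.sqrt (σx2 / M h) = Real.sqrt σx2 / Real.sqrt (M h) :=
      Real.sqrt_div hσx.le _
    have hupos : 0 < b * Real.sqrt (σx2 / M h) := by positivity
    have := Qfun_le _ hupos
    have h2 : a * Qfun (b * Real.sqrt (σx2 / M h)) ≤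
        a * ((Real.sqrt (2 * Real.pi))⁻¹ * (b * Real.sqrt (σx2 / M h))⁻¹) :=
      mul_le_mul_of_nonneg_left this ha.le
    refine h2.trans (le_of_eq ?_)
    rw [hsq, hC]
    have h3 : Real.sqrt (M h) ≠ 0 := (Real.sqrt_pos.mpr hMh).ne'
    have h4 : Real.sqrt σx2 ≠ 0 := (Real.sqrt_pos.mpr hσx).ne'
    have h5 : Real.sqrt (2 * Real.pi) ≠ 0 := by positivity
    field_simp
  -- integrability of LHS
  have hQmeas : Measurable Qfun := Qfun_antitone.measurable
  have hLHSmeas : AEStronglyMeasurable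
      (fun h : ℂ => a * Qfun (b * Real.sqrt (σx2 / M h))) μ := by
    apply Measurable.aestronglyMeasurable
    apply Measurable.const_mul
    exact hQmeas.comp (continuous_const.mul
      ((continuous_const.div hMcont (fun h => (hMpos h).ne')).sqrt)).measurable
  have hLHSint : Integrable (fun h : ℂ => a * Qfun (b * Real.sqrt (σx2 / M h))) μ :=
    (hsqrtMint.const_mul C).mono' hLHSmeas
      (Filter.Eventually.of_forall (fun h => by
        rw [Real.norm_eq_abs, abs_of_nonneg (mul_nonneg ha.le (Qfun_nonneg _))]
        exact hpt h))
  calc (∫ h, a * Qfun (b * Real.sqrt (σx2 / M h)) ∂μ)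
      ≤ ∫ h, C * Real.sqrt (M h) ∂μ :=
        integral_mono hLHSint (hsqrtMint.const_mul C) hpt
    _ = C * ∫ h, Real.sqrt (M h) ∂μ := MeasureTheory.integral_const_mul C _
    _ ≤ C * Real.sqrt (∫ h, M h ∂μ) := by
        apply mul_le_mul_of_nonneg_left _ hCpos.le
        set I : ℝ := ∫ h, M h ∂μ with hI
        have hInn : 0 ≤ I := integral_nonneg (fun h => (hMpos h).le)
        rcases eq_or_lt_of_le hInn with hI0 | hIpos
        · have hM0 : M =ᵐ[μ] 0 := by
            rw [← integral_eq_zero_iff_of_nonneg (fun h => (hMpos h).le) hMint]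
            exact hI0.symm
          have : (∫ h, Real.sqrt (M h) ∂μ) = 0 := by
            rw [integral_eq_zero_iff_of_nonneg (fun h => Real.sqrt_nonneg _) hsqrtMint]
            filter_upwards [hM0] with h hh
            simp [hh]
          rw [this]
          exact Real.sqrt_nonneg _
        · have hIs : 0 < Real.sqrt I := Real.sqrt_pos.mpr hIpos
          have hpt2 : ∀ h, Real.sqrt (M h) ≤ (M h + I) / (2 * Real.sqrt I) := by
            intro h
            rw [le_div_iff₀ (by positivity)]
            have h1 := Real.sq_sqrt (hMpos h).le
            have h2 := Real.sq_sqrt hInn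
            nlinarith [sq_nonneg (Real.sqrt (M h) - Real.sqrt I)]
          calc (∫ h, Real.sqrt (M h) ∂μ)
              ≤ ∫ h, (M h + I) / (2 * Real.sqrt I) ∂μ :=
                integral_mono hsqrtMint ((hMint.add (integrable_const I)).div_const _) hpt2
            _ = (I + I) / (2 * Real.sqrt I) := by
                rw [integral_div, integral_add hMint (integrable_const I), integral_const]
                simp [hI]
            _ = Real.sqrt I := by
                rw [show I + I = 2 * I by ring, mul_div_mul_left _ _ (two_ne_zero), Real.div_sqrt]
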